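/- For every integer d, the smallest partition μ (colored with angle color 1, i.e. box (i,j) has color (i - j + 1) mod 2) satisfying d(μ) = N_0(μ) - N_1(μ) = d has exactly 2d² + d boxes. -/

import Mathlib

/-- `d(μ) = N₀(μ) - N₁(μ)` for a Young diagram colored with angle color 1:
the box `(i, j)` has color `(i - j + 1) mod 2 = (i + j + 1) mod 2`. -/
def dcol1 (μ : YoungDiagram) : ℤ :=
  ((μ.cells.filter fun c => (c.1 + c.2 + 1) % 2 = 0).card : ℤ) -
    ((μ.cells.filter fun c => (c.1 + c.2 + 1) % 2 = 1).card : ℤ)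

open Finset

/-- Remove the first row of a Young diagram and shift everything up. -/
def ytail (ν : YoungDiagram) : YoungDiagram where
  cells := (ν.cells.filter fun c => c.1 ≠ 0).image fun c => (c.1 - 1, c.2)
  isLowerSet := by
    intro a b hab ha
    simp only [coe_image, Set.mem_image, mem_coe, mem_filter] at ha ⊢
    obtain ⟨c, ⟨hc, hc0⟩, hceq⟩ := ha
    have h1 : b.1 ≤ c.1 - 1 := by rw [← hceq] at hab; exact hab.1
    have h2 : b.2 ≤ c.2 := by rw [← hceq] at hab; exact hab.2
    have hcc : (c.1, c.2) ∈ ν := by simpa using hc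
    have hbb : (b.1 + 1, b.2) ∈ ν :=
      ν.up_left_mem (i2 := c.1) (j2 := c.2) (by omega) h2 hcc
    exact ⟨(b.1 + 1, b.2), ⟨by simpa using hbb, by simp⟩, by simp⟩

lemma mem_ytail {ν : YoungDiagram} {a b : ℕ} : (a, b) ∈ ytail ν ↔ (a + 1, b) ∈ ν := by
  constructor
  · intro h
    change (a, b) ∈ ((ν.cells.filter fun c => c.1 ≠ 0).image fun c => (c.1 - 1, c.2)) at h
    simp only [ytail, YoungDiagram.mem_mk, mem_image, mem_filter] at h
    obtain ⟨⟨c1, c2⟩, ⟨hc, hc0⟩, heq⟩ := h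
    simp only [Prod.mk.injEq] at heq hc0
    have : c1 = a + 1 := by omega
    subst this
    simpa [heq.2] using hc
  · intro h
    change (a, b) ∈ ((ν.cells.filter fun c => c.1 ≠ 0).image fun c => (c.1 - 1, c.2))
    simp only [ytail, YoungDiagram.mem_mk, mem_image, mem_filter]
    exact ⟨(a + 1, b), ⟨h, by simp⟩, by simp⟩

lemma dcol1_eq_sum (μ : YoungDiagram) :
    dcol1 μ = ∑ c ∈ μ.cells, (-1 : ℤ) ^ (c.1 + c.2 + 1) := by
  rw [dcol1, Finset.card_filter, Finset.card_filter]
  push_cast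
  rw [← Finset.sum_sub_distrib]
  refine Finset.sum_congr rfl fun c _ => ?_
  rcases Nat.even_or_odd (c.1 + c.2 + 1) with h | h
  · rw [h.neg_one_pow]; rw [Nat.even_iff] at h; simp [h]
  · rw [h.neg_one_pow]; rw [Nat.odd_iff] at h; simp [h]

lemma sum_alt (r : ℕ) : ∑ j ∈ Finset.range r, (-1 : ℤ) ^ (j + 1) = -(r % 2 : ℕ) := by
  induction r with
  | zero => simp
  | succ n ih =>
    rw [Finset.sum_range_succ, ih]
    rcases Nat.even_or_odd (n + 1) with h | h
    · rw [h.neg_one_pow]; rw [Nat.even_iff] at h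
      have h1 : n % 2 = 1 := by omega
      have h2 : (n + 1) % 2 = 0 := h
      rw [h1, h2]; norm_num
    · rw [h.neg_one_pow]; rw [Nat.odd_iff] at h
      have h1 : n % 2 = 0 := by omega
      rw [h1, h]; norm_num

lemma row0_filter (ν : YoungDiagram) :
    ν.cells.filter (fun c => c.1 = 0) = (Finset.range (ν.rowLen 0)).image fun j => (0, j) := by
  ext ⟨a, b⟩
  simp only [mem_filter, mem_image, mem_range, Prod.mk.injEq, YoungDiagram.mem_cells]
  constructor
  · rintro ⟨hm, rfl⟩
    exact ⟨b, YoungDiagram.mem_iff_lt_rowLen.mp hm, rfl, rfl⟩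
  · rintro ⟨j, hj, rfl, rfl⟩
    exact ⟨YoungDiagram.mem_iff_lt_rowLen.mpr hj, rfl⟩

lemma ytail_sum (ν : YoungDiagram) :
    ∑ c ∈ (ytail ν).cells, (-1 : ℤ) ^ (c.1 + c.2 + 1)
      = -∑ c ∈ ν.cells.filter (fun c => ¬c.1 = 0), (-1 : ℤ) ^ (c.1 + c.2 + 1) := by
  have hinj : ∀ x ∈ ν.cells.filter (fun c => ¬c.1 = 0), ∀ y ∈ ν.cells.filter (fun c => ¬c.1 = 0),
      (fun c : ℕ × ℕ => (c.1 - 1, c.2)) x = (fun c : ℕ × ℕ => (c.1 - 1, c.2)) y → x = y := by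
    rintro ⟨x1, x2⟩ hx ⟨y1, y2⟩ hy hxy
    simp only [mem_filter] at hx hy
    simp only [Prod.mk.injEq] at hxy ⊢
    constructor
    · have := hx.2; have := hy.2; omega
    · exact hxy.2
  show ∑ c ∈ (ν.cells.filter fun c => ¬c.1 = 0).image (fun c => (c.1 - 1, c.2)), _ = _
  rw [Finset.sum_image hinj, ← Finset.sum_neg_distrib]
  refine Finset.sum_congr rfl fun c hc => ?_
  simp only [mem_filter] at hc
  have h : c.1 + c.2 + 1 = (c.1 - 1 + c.2 + 1) + 1 := by omega
  rw [h, pow_succ]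
  ring

lemma dcol1_ytail (ν : YoungDiagram) :
    dcol1 ν = -(ν.rowLen 0 % 2 : ℕ) - dcol1 (ytail ν) := by
  rw [dcol1_eq_sum, dcol1_eq_sum, ytail_sum,
    ← Finset.sum_filter_add_sum_filter_not ν.cells (fun c => c.1 = 0), row0_filter,
    Finset.sum_image (by simp)]
  simp only [zero_add, sum_alt]
  ring

lemma card_ytail (ν : YoungDiagram) : ν.card = ν.rowLen 0 + (ytail ν).card := by
  have h1 : ν.cells.card = (ν.cells.filter fun c => c.1 = 0).card
      + (ν.cells.filter fun c => ¬(c.1 = 0)).card :=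
    (Finset.card_filter_add_card_filter_not _).symm
  have h2 : (ν.cells.filter fun c => c.1 = 0).card = ν.rowLen 0 := by
    rw [row0_filter, Finset.card_image_of_injective _ (by intro x y h; simpa using h)]
    simp
  have h3 : (ytail ν).cells.card = (ν.cells.filter fun c => ¬(c.1 = 0)).card := by
    show ((ν.cells.filter fun c => c.1 ≠ 0).image fun c => (c.1 - 1, c.2)).card = _
    apply Finset.card_image_of_injOn
    rintro ⟨x1, x2⟩ hx ⟨y1, y2⟩ hy hxy
    simp only [coe_filter, Set.mem_setOf_eq] at hx hy
    simp only [Prod.mk.injEq] at hxy ⊢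
    exact ⟨by have := hx.2; have := hy.2; omega, hxy.2⟩
  show ν.cells.card = _ + (ytail ν).cells.card
  omega

lemma key : ∀ n (ν : YoungDiagram), ν.card = n → ∀ i j : ℕ, (i, j) ∉ ν →
    2 * dcol1 ν ≤ (i : ℤ) + j ∧ -(2 * dcol1 ν) ≤ (i : ℤ) + j + 1 := by
  intro n
  induction n using Nat.strong_induction_on with
  | _ n ih =>
    intro ν hcard i j hij
    by_cases hbot : ν = ⊥
    · subst hbot
      have : dcol1 ⊥ = 0 := by simp [dcol1]
      rw [this]
      constructor <;> positivity
    · have h00 : (0, 0) ∈ ν := by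
        have hne : ν.cells.Nonempty := by
          rw [Finset.nonempty_iff_ne_empty]
          intro h
          apply hbot
          ext c
          simp [h, YoungDiagram.cells_bot]
        obtain ⟨⟨a, b⟩, hc⟩ := hne
        exact ν.up_left_mem (Nat.zero_le a) (Nat.zero_le b) (by simpa using hc)
      have hr : 0 < ν.rowLen 0 := YoungDiagram.mem_iff_lt_rowLen.mp h00
      have hrec := dcol1_ytail ν
      have hct := card_ytail ν
      have ihtail := ih (ytail ν).card (by omega) (ytail ν) rfl
      rcases Nat.eq_zero_or_pos i with rfl | hi
      · have hj : ν.rowLen 0 ≤ j := by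
          by_contra h
          exact hij (YoungDiagram.mem_iff_lt_rowLen.mpr (by omega))
        have hnot : (0, ν.rowLen 0) ∉ ytail ν := by
          rw [mem_ytail]
          intro h
          have h2 : ν.rowLen (0 + 1) ≤ ν.rowLen 0 := ν.rowLen_anti 0 (0 + 1) (by omega)
          rw [YoungDiagram.mem_iff_lt_rowLen] at h
          omega
        obtain ⟨h1, h2⟩ := ihtail 0 (ν.rowLen 0) hnot
        constructor <;> omega
      · have hnot : (i - 1, j) ∉ ytail ν := by
          rw [mem_ytail]
          intro h
          apply hij
          have : i - 1 + 1 = i := by omega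
          rwa [this] at h
        obtain ⟨h1, h2⟩ := ihtail (i - 1) j hnot
        constructor <;> omega

/-- The staircase Young diagram with rows `k, k-1, …, 1`. -/
def staircase (k : ℕ) : YoungDiagram where
  cells := (Finset.range k ×ˢ Finset.range k).filter fun c => c.1 + c.2 < k
  isLowerSet := by
    intro a b hab ha
    simp only [coe_filter, Set.mem_setOf_eq, mem_coe, mem_product, mem_range] at ha ⊢
    have h1 := hab.1
    have h2 := hab.2
    exact ⟨⟨by omega, by omega⟩, by omega⟩

lemma mem_staircase {k a b : ℕ} : (a, b) ∈ staircase k ↔ a + b < k := by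
  change ((a, b) ∈ (Finset.range k ×ˢ Finset.range k).filter fun c => c.1 + c.2 < k) ↔ a + b < k
  simp only [staircase, YoungDiagram.mem_mk, mem_filter, mem_product, mem_range]
  omega

lemma staircase_zero : staircase 0 = ⊥ := by
  ext ⟨a, b⟩
  simp [staircase]

lemma rowLen_staircase (k : ℕ) : (staircase (k + 1)).rowLen 0 = k + 1 := by
  have h1 : (0, k) ∈ staircase (k + 1) := mem_staircase.mpr (by omega)
  have h2 : (0, k + 1) ∉ staircase (k + 1) := by rw [mem_staircase]; omega
  rw [YoungDiagram.mem_iff_lt_rowLen] at h1 h2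
  omega

lemma ytail_staircase (k : ℕ) : ytail (staircase (k + 1)) = staircase k := by
  ext ⟨a, b⟩
  show (a, b) ∈ ytail (staircase (k + 1)) ↔ (a, b) ∈ staircase k
  rw [mem_ytail, mem_staircase, mem_staircase]
  omega

lemma dcol1_staircase_succ (k : ℕ) :
    dcol1 (staircase (k + 1)) = -((k + 1) % 2 : ℕ) - dcol1 (staircase k) := by
  rw [dcol1_ytail, rowLen_staircase, ytail_staircase]

lemma dcol1_bot : dcol1 (⊥ : YoungDiagram) = 0 := by simp [dcol1]

lemma dcol1_staircase (k : ℕ) :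
    dcol1 (staircase (2 * k)) = (k : ℤ) ∧ dcol1 (staircase (2 * k + 1)) = -((k : ℤ) + 1) := by
  induction k with
  | zero =>
    constructor
    · show dcol1 (staircase 0) = 0
      rw [staircase_zero, dcol1_bot]
    · have h := dcol1_staircase_succ 0
      rw [staircase_zero, dcol1_bot] at h
      rw [show 2 * 0 + 1 = 0 + 1 from rfl, h]
      norm_num
  | succ k ih =>
    have h1 := dcol1_staircase_succ (2 * k + 1)
    rw [ih.2] at h1
    have ha : dcol1 (staircase (2 * (k + 1))) = (k : ℤ) + 1 := by
      have e1 : 2 * (k + 1) = 2 * k + 1 + 1 := by ring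
      rw [e1, h1, show (2 * k + 1 + 1) % 2 = 0 from by omega]
      push_cast
      ring
    have h2 := dcol1_staircase_succ (2 * (k + 1))
    rw [ha, show (2 * (k + 1) + 1) % 2 = 1 from by omega] at h2
    refine ⟨by rw [ha]; push_cast; ring, by rw [h2]; push_cast; ring⟩

lemma card_staircase (k : ℕ) : 2 * (staircase k).card = k * (k + 1) := by
  induction k with
  | zero =>
    rw [staircase_zero]
    simp [YoungDiagram.card]
  | succ k ih =>
    have h := card_ytail (staircase (k + 1))
    rw [rowLen_staircase, ytail_staircase] at h
    have e : (k + 1) * (k + 1 + 1) = k * (k + 1) + 2 * (k + 1) := by ring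
    omega

/-- For every integer `d` the smallest partition `μ` (under inclusion of Young diagrams)
with `d(μ) = d` (angle color `1`) exists and has exactly `2d² + d` boxes. -/
theorem smallest_partition_color1 (d : ℤ) :
    ∃ μ : YoungDiagram,
      (dcol1 μ = d ∧ ∀ ν : YoungDiagram, dcol1 ν = d → μ ≤ ν) ∧
        (μ.card : ℤ) = 2 * d ^ 2 + d := by
  rcases le_or_gt 0 d with hd | hd
  · refine ⟨staircase (2 * d.toNat), ⟨?_, ?_⟩, ?_⟩
    · rw [(dcol1_staircase d.toNat).1]; omega
    · intro ν hν
      rw [← YoungDiagram.cells_subset_iff]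
      rintro ⟨a, b⟩ hc
      rw [YoungDiagram.mem_cells, mem_staircase] at hc
      rw [YoungDiagram.mem_cells]
      by_contra hmem
      obtain ⟨h1, h2⟩ := key ν.card ν rfl a b hmem
      rw [hν] at h1 h2
      omega
    · have h := card_staircase (2 * d.toNat)
      have hk : ((2 * d.toNat : ℕ) : ℤ) = 2 * d := by omega
      have h2 : 2 * ((staircase (2 * d.toNat)).card : ℤ) = (2 * d) * (2 * d + 1) := by
        rw [← hk]
        exact_mod_cast congrArg (Nat.cast : ℕ → ℤ) h
      have h3 : (2 * d) * (2 * d + 1) = 2 * (2 * d ^ 2 + d) := by ring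
      linarith [h2, h3]
  · refine ⟨staircase (2 * (-d - 1).toNat + 1), ⟨?_, ?_⟩, ?_⟩
    · rw [(dcol1_staircase (-d - 1).toNat).2]; omega
    · intro ν hν
      rw [← YoungDiagram.cells_subset_iff]
      rintro ⟨a, b⟩ hc
      rw [YoungDiagram.mem_cells, mem_staircase] at hc
      rw [YoungDiagram.mem_cells]
      by_contra hmem
      obtain ⟨h1, h2⟩ := key ν.card ν rfl a b hmem
      rw [hν] at h1 h2
      omega
    · have h := card_staircase (2 * (-d - 1).toNat + 1)
      have hk : (((-d - 1).toNat : ℕ) : ℤ) = -d - 1 := by omega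
      have h2 : 2 * ((staircase (2 * (-d - 1).toNat + 1)).card : ℤ)
          = (-2 * d - 1) * (-2 * d) := by
        have hc := congrArg (Nat.cast : ℕ → ℤ) h
        push_cast at hc
        rw [hc, hk]
        ring
      have h3 : (-2 * d - 1) * (-2 * d) = 2 * (2 * d ^ 2 + d) := by ring
      linarith [h2, h3]
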